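/- Let N ≥ 1 and let L be a positive operator on the N-partite Hilbert space H. Let a and a' be families of unit vectors such that the product vector P(a') attains the maximum of |⟨P(b), L P(a)⟩| over all families b of unit vectors, with the global phase chosen so that ⟨P(a'), L P(a)⟩ is a nonnegative real number. Then ⟨P(a), L P(a)⟩ ≤ ⟨P(a'), L P(a)⟩ ≤ ⟨P(a'), L P(a')⟩. Moreover, equality holds throughout if and only if P(a') = P(a). (Theorem 3, Monotony.) -/

import Mathlib

open scoped ComplexInnerProductSpace

/-- The product vector `P(a)` of a family of vectors, `P(a) i = ∏ j, a j (i j)`. -/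
noncomputable def prodVec {N : ℕ} {d : Fin N → ℕ}
    (a : (j : Fin N) → EuclideanSpace ℂ (Fin (d j))) :
    EuclideanSpace ℂ ((j : Fin N) → Fin (d j)) :=
  WithLp.toLp 2 (fun i => ∏ j, a j (i j))

/-- **Theorem 3 (Monotony).**  Let `L` be a positive operator on the `(N+1)`-partite
space, and let `a`, `a'` be families of unit vectors such that `P(a')` attains the
maximum of `|⟨P(b), L P(a)⟩|` over families of unit vectors `b`, with the global phase
chosen so that `⟨P(a'), L P(a)⟩` is a nonnegative real.  Then
`⟨P(a), L P(a)⟩ ≤ ⟨P(a'), L P(a)⟩ ≤ ⟨P(a'), L P(a')⟩`, with equality throughout iff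
`P(a') = P(a)`. -/
theorem monotony {N : ℕ} {d : Fin (N + 1) → ℕ}
    (L : EuclideanSpace ℂ ((j : Fin (N + 1)) → Fin (d j)) →L[ℂ]
        EuclideanSpace ℂ ((j : Fin (N + 1)) → Fin (d j)))
    (hLsa : IsSelfAdjoint L)
    (hLpos : ∀ x : EuclideanSpace ℂ ((j : Fin (N + 1)) → Fin (d j)),
      x ≠ 0 → 0 < (⟪x, L x⟫).re)
    (a a' : (j : Fin (N + 1)) → EuclideanSpace ℂ (Fin (d j)))
    (ha : ∀ j, ‖a j‖ = 1) (ha' : ∀ j, ‖a' j‖ = 1)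
    (hmax : ∀ b : (j : Fin (N + 1)) → EuclideanSpace ℂ (Fin (d j)),
      (∀ j, ‖b j‖ = 1) →
      ‖⟪prodVec b, L (prodVec a)⟫‖ ≤ ‖⟪prodVec a', L (prodVec a)⟫‖)
    (hphase : (⟪prodVec a', L (prodVec a)⟫).im = 0 ∧ 0 ≤ (⟪prodVec a', L (prodVec a)⟫).re) :
    (⟪prodVec a, L (prodVec a)⟫).re ≤ (⟪prodVec a', L (prodVec a)⟫).re ∧
    (⟪prodVec a', L (prodVec a)⟫).re ≤ (⟪prodVec a', L (prodVec a')⟫).re ∧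
    ((⟪prodVec a, L (prodVec a)⟫).re = (⟪prodVec a', L (prodVec a')⟫).re ↔
      prodVec a' = prodVec a) := by

  set x := prodVec a with hx
  set y := prodVec a' with hy
  have hsym : ∀ u v : EuclideanSpace ℂ ((j : Fin (N + 1)) → Fin (d j)),
      ⟪L u, v⟫ = ⟪u, L v⟫ := fun u v => hLsa.isSymmetric u v
  have hxy : ⟪x, L y⟫ = (starRingEnd ℂ) ⟪y, L x⟫ := by
    rw [← hsym x y, ← inner_conj_symm]
  have hnorm : ‖⟪y, L x⟫‖ = (⟪y, L x⟫).re := by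
    have : ⟪y, L x⟫ = ((⟪y, L x⟫).re : ℂ) := Complex.ext rfl (by rw [Complex.ofReal_im]; exact hphase.1)
    rw [this, Complex.norm_real, Real.norm_eq_abs, abs_of_nonneg hphase.2, Complex.ofReal_re]
  have h1 : (⟪x, L x⟫).re ≤ (⟪y, L x⟫).re := by
    calc (⟪x, L x⟫).re ≤ ‖⟪x, L x⟫‖ := Complex.re_le_norm _
      _ ≤ ‖⟪y, L x⟫‖ := hmax a ha
      _ = (⟪y, L x⟫).re := hnorm
  have hpos : ∀ z : EuclideanSpace ℂ ((j : Fin (N + 1)) → Fin (d j)),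
      0 ≤ (⟪z, L z⟫).re := by
    intro z
    by_cases h : z = 0
    · simp [h]
    · exact (hLpos z h).le
  have hz : (⟪y - x, L (y - x)⟫).re
      = (⟪y, L y⟫).re - 2 * (⟪y, L x⟫).re + (⟪x, L x⟫).re := by
    rw [map_sub, inner_sub_left, inner_sub_right, inner_sub_right, hxy]
    simp only [Complex.sub_re, Complex.add_re, Complex.conj_re]
    ring
  have h2 : (⟪y, L x⟫).re ≤ (⟪y, L y⟫).re := by
    have := hpos (y - x)
    rw [hz] at this
    linarith
  refine ⟨h1, h2, ?_, fun h => by rw [h]⟩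
  intro h
  have hzero : (⟪y - x, L (y - x)⟫).re = 0 := by rw [hz]; linarith
  have : y - x = 0 := by
    by_contra h0
    exact absurd hzero (ne_of_gt (hLpos _ h0))
  exact sub_eq_zero.mp this
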